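/- Let A ∈ ℝ^{M×r} and R ∈ ℝ^{M×r'} with r ≤ r' ≤ M, and let b ∈ ℝ^M. Let Q ∈ ℝ^{M×r_Q} (r_Q ≤ r+1) have orthonormal columns spanning the column space of the augmented matrix [A | b], and assume R^T Q has full column rank. If x minimizes ‖R^T A x̂ − R^T b‖₂ over x̂ ∈ ℝ^r and y minimizes ‖A ŷ − b‖₂ over ŷ ∈ ℝ^r, then ‖A x − b‖₂ ≤ κ(R^T Q) · ‖A y − b‖₂, where κ(R^T Q) = σ_max(R^T Q)/σ_min(R^T Q). -/

import Mathlib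

open scoped BigOperators
open MeasureTheory ProbabilityTheory Matrix

noncomputable def enorm2 {n : ℕ} (v : Fin n → ℝ) : ℝ :=
  ‖(WithLp.equiv 2 (Fin n → ℝ)).symm v‖

noncomputable def sMax {m n : ℕ} (A : Matrix (Fin m) (Fin n) ℝ) : ℝ :=
  ⨆ x : {x : Fin n → ℝ // enorm2 x = 1}, enorm2 (A.mulVec x.1)

noncomputable def sMin {m n : ℕ} (A : Matrix (Fin m) (Fin n) ℝ) : ℝ :=
  ⨅ x : {x : Fin n → ℝ // enorm2 x = 1}, enorm2 (A.mulVec x.1)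

lemma enorm_nonneg' {n : ℕ} (v : Fin n → ℝ) : 0 ≤ enorm2 v := norm_nonneg _

lemma enorm_zero' {n : ℕ} : enorm2 (0 : Fin n → ℝ) = 0 := by
  simp [enorm2]

lemma enorm2_eq_zero {n : ℕ} {v : Fin n → ℝ} : enorm2 v = 0 ↔ v = 0 := by
  rw [enorm2, norm_eq_zero]
  exact ⟨fun h => by simpa using congrArg (WithLp.equiv 2 (Fin n → ℝ)) h, fun h => by simp [h]⟩

lemma enorm_smul' {n : ℕ} (c : ℝ) (v : Fin n → ℝ) : enorm2 (c • v) = |c| * enorm2 v := by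
  rw [enorm2, enorm2]
  have : (WithLp.equiv 2 (Fin n → ℝ)).symm (c • v)
      = c • (WithLp.equiv 2 (Fin n → ℝ)).symm v := rfl
  rw [this, norm_smul, Real.norm_eq_abs]

lemma enorm_mulVec_le {m n : ℕ} (S : Matrix (Fin m) (Fin n) ℝ) (v : Fin n → ℝ) :
    enorm2 (S.mulVec v) ≤
      ‖(Matrix.toEuclideanLin S).toContinuousLinearMap‖ * enorm2 v := by
  have h : enorm2 (S.mulVec v)
      = ‖(Matrix.toEuclideanLin S).toContinuousLinearMap
          ((WithLp.equiv 2 (Fin n → ℝ)).symm v)‖ := by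
    congr 1
  rw [h]
  exact ((Matrix.toEuclideanLin S).toContinuousLinearMap).le_opNorm _

lemma bddAbove_range {m n : ℕ} (S : Matrix (Fin m) (Fin n) ℝ) :
    BddAbove (Set.range fun x : {x : Fin n → ℝ // enorm2 x = 1} => enorm2 (S.mulVec x.1)) := by
  refine ⟨‖(Matrix.toEuclideanLin S).toContinuousLinearMap‖, ?_⟩
  rintro _ ⟨⟨v, hv⟩, rfl⟩
  simpa [hv] using enorm_mulVec_le S v

set_option maxHeartbeats 1000000 in
lemma le_sMax' {m n : ℕ} (S : Matrix (Fin m) (Fin n) ℝ) (v : Fin n → ℝ) (hv : enorm2 v = 1) :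
    enorm2 (S.mulVec v) ≤ sMax S := by
  rw [sMax]; exact le_ciSup (bddAbove_range S) ⟨v, hv⟩

set_option maxHeartbeats 1000000 in
lemma sMin_le' {m n : ℕ} (S : Matrix (Fin m) (Fin n) ℝ) (v : Fin n → ℝ) (hv : enorm2 v = 1) :
    sMin S ≤ enorm2 (S.mulVec v) := by
  have hb : BddBelow
      (Set.range fun x : {x : Fin n → ℝ // enorm2 x = 1} => enorm2 (S.mulVec x.1)) := by
    refine ⟨0, ?_⟩
    rintro _ ⟨w, rfl⟩
    exact enorm_nonneg' _
  rw [sMin]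
  exact ciInf_le hb ⟨v, hv⟩

lemma unit_enorm {n : ℕ} {v : Fin n → ℝ} (hv : v ≠ 0) : enorm2 ((enorm2 v)⁻¹ • v) = 1 := by
  have h : enorm2 v ≠ 0 := fun h => hv (enorm2_eq_zero.mp h)
  rw [enorm_smul', abs_inv, abs_of_nonneg (enorm_nonneg' v), inv_mul_cancel₀ h]

lemma key_low {m n : ℕ} (S : Matrix (Fin m) (Fin n) ℝ) (v : Fin n → ℝ) :
    sMin S * enorm2 v ≤ enorm2 (S.mulVec v) := by
  by_cases hv : v = 0
  · simp [hv, enorm_zero', Matrix.mulVec_zero]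
  · have h0 : 0 < enorm2 v :=
      lt_of_le_of_ne (enorm_nonneg' v) (fun h => hv (enorm2_eq_zero.mp h.symm))
    have := sMin_le' S _ (unit_enorm hv)
    rw [Matrix.mulVec_smul, enorm_smul', abs_inv, abs_of_nonneg (enorm_nonneg' v)] at this
    calc sMin S * enorm2 v ≤ ((enorm2 v)⁻¹ * enorm2 (S.mulVec v)) * enorm2 v :=
          mul_le_mul_of_nonneg_right this h0.le
      _ = enorm2 (S.mulVec v) := by field_simp
  
lemma key_high {m n : ℕ} (S : Matrix (Fin m) (Fin n) ℝ) (v : Fin n → ℝ) :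
    enorm2 (S.mulVec v) ≤ sMax S * enorm2 v := by
  by_cases hv : v = 0
  · simp [hv, enorm_zero', Matrix.mulVec_zero]
  · have h0 : 0 < enorm2 v :=
      lt_of_le_of_ne (enorm_nonneg' v) (fun h => hv (enorm2_eq_zero.mp h.symm))
    have := le_sMax' S _ (unit_enorm hv)
    rw [Matrix.mulVec_smul, enorm_smul', abs_inv, abs_of_nonneg (enorm_nonneg' v)] at this
    calc enorm2 (S.mulVec v) = ((enorm2 v)⁻¹ * enorm2 (S.mulVec v)) * enorm2 v := by field_simp
      _ ≤ sMax S * enorm2 v := mul_le_mul_of_nonneg_right this h0.le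

lemma enorm_Q {M rQ : ℕ} (Q : Matrix (Fin M) (Fin rQ) ℝ) (hQ : Qᵀ * Q = 1)
    (w : Fin rQ → ℝ) : enorm2 (Q.mulVec w) = enorm2 w := by
  have hd : ∀ {k : ℕ} (u : Fin k → ℝ), enorm2 u = Real.sqrt (u ⬝ᵥ u) := by
    intro k u
    rw [enorm2, EuclideanSpace.norm_eq]
    congr 1
    simp [dotProduct, Real.norm_eq_abs, sq_abs, sq]
  rw [hd, hd]
  congr 1
  rw [Matrix.dotProduct_mulVec, ← Matrix.mulVec_transpose,
    Matrix.mulVec_mulVec, hQ, Matrix.one_mulVec]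

theorem stmt_9 {M r r' rQ : ℕ} (hr : r ≤ r') (hr' : r' ≤ M) (hrQ : rQ ≤ r + 1)
    (A : Matrix (Fin M) (Fin r) ℝ) (R : Matrix (Fin M) (Fin r') ℝ)
    (b : Fin M → ℝ)
    (Q : Matrix (Fin M) (Fin rQ) ℝ) (TA : Matrix (Fin rQ) (Fin r) ℝ) (Tb : Fin rQ → ℝ)
    (hQ : Qᵀ * Q = 1) (hA : A = Q * TA) (hb : b = Q.mulVec Tb)
    (hfull : 0 < sMin (Rᵀ * Q))
    (x y : Fin r → ℝ)
    (hx : ∀ z : Fin r → ℝ,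
      enorm2 (Rᵀ.mulVec (A.mulVec x - b)) ≤ enorm2 (Rᵀ.mulVec (A.mulVec z - b)))
    (hy : ∀ z : Fin r → ℝ,
      enorm2 (A.mulVec y - b) ≤ enorm2 (A.mulVec z - b)) :
    enorm2 (A.mulVec x - b) ≤
      (sMax (Rᵀ * Q) / sMin (Rᵀ * Q)) * enorm2 (A.mulVec y - b) := by
  set S := Rᵀ * Q with hS
  have hres : ∀ z : Fin r → ℝ, A.mulVec z - b = Q.mulVec (TA.mulVec z - Tb) := by
    intro z
    rw [hA, hb, Matrix.mulVec_sub, Matrix.mulVec_mulVec]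
  have hRres : ∀ z : Fin r → ℝ,
      Rᵀ.mulVec (A.mulVec z - b) = S.mulVec (TA.mulVec z - Tb) := by
    intro z
    rw [hres, Matrix.mulVec_mulVec]
  have hchain : sMin S * enorm2 (A.mulVec x - b) ≤ sMax S * enorm2 (A.mulVec y - b) := by
    calc sMin S * enorm2 (A.mulVec x - b) = sMin S * enorm2 (TA.mulVec x - Tb) := by
          rw [hres, enorm_Q Q hQ]
      _ ≤ enorm2 (S.mulVec (TA.mulVec x - Tb)) := key_low S _
      _ = enorm2 (Rᵀ.mulVec (A.mulVec x - b)) := by rw [hRres]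
      _ ≤ enorm2 (Rᵀ.mulVec (A.mulVec y - b)) := hx y
      _ = enorm2 (S.mulVec (TA.mulVec y - Tb)) := by rw [hRres]
      _ ≤ sMax S * enorm2 (TA.mulVec y - Tb) := key_high S _
      _ = sMax S * enorm2 (A.mulVec y - b) := by rw [hres, enorm_Q Q hQ]
  rw [div_mul_eq_mul_div, le_div_iff₀ hfull, mul_comm]
  exact hchain
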